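/- Let m1, m2, α > 0 and N1^a, N1^A, N2^a, N2^A > 0. Then every complex eigenvalue of the 3×3 matrix J_{S_L} (defined in the context) has strictly negative real part. -/

import Mathlib

private lemma cubic_re_neg (A B C : ℝ) (hA : 0 < A) (hC : 0 < C) (hABC : C < A*B) (μ : ℂ)
    (h : μ^3 + (A:ℂ)*μ^2 + (B:ℂ)*μ + (C:ℂ) = 0) : μ.re < 0 := by
  rw [Complex.ext_iff] at h
  simp only [Complex.add_re, Complex.add_im, Complex.mul_re, Complex.mul_im,
    Complex.ofReal_re, Complex.ofReal_im, Complex.zero_re, Complex.zero_im,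
    pow_succ, pow_zero, Complex.one_re, Complex.one_im] at h
  obtain ⟨hre, him⟩ := h
  ring_nf at hre him
  set u := μ.re with hu
  set v := μ.im with hv
  by_contra hcon
  push_neg at hcon
  have hB : 0 < B := by
    rcases le_or_gt B 0 with hb | hb
    · nlinarith [mul_nonpos_of_nonneg_of_nonpos hA.le hb]
    · exact hb
  rcases eq_or_ne v 0 with hv0 | hv0
  · rw [hv0] at hre
    nlinarith [mul_nonneg (mul_nonneg hcon hcon) hcon,
      mul_nonneg hA.le (mul_nonneg hcon hcon), mul_nonneg hB.le hcon]
  · have hv2 : 0 < v^2 := by positivity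
    have him' : 3*u^2 - v^2 + 2*A*u + B = 0 := by
      rcases mul_eq_zero.mp (show v * (3*u^2 - v^2 + 2*A*u + B) = 0 by
        linear_combination him) with h' | h'
      · exact absurd h' hv0
      · exact h'
    nlinarith [mul_nonneg hcon (sq_nonneg (A+u)), mul_nonneg hcon hv2.le, sq_nonneg (A+u)]

private lemma spectrum_det (J : Matrix (Fin 3) (Fin 3) ℝ) (μ : ℂ)
    (hμ : μ ∈ spectrum ℂ (J.map Complex.ofReal)) :
    ((algebraMap ℂ (Matrix (Fin 3) (Fin 3) ℂ)) μ - J.map Complex.ofReal).det = 0 := by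
  rw [spectrum.mem_iff] at hμ
  by_contra hd
  exact hμ ((Matrix.isUnit_iff_isUnit_det _).mpr (isUnit_iff_ne_zero.mpr hd))

private lemma det_to_cubic (e00 e01 e02 e10 e11 e12 e20 e21 e22 : ℝ) (μ : ℂ)
    (h : ((algebraMap ℂ (Matrix (Fin 3) (Fin 3) ℂ)) μ -
      (!![e00,e01,e02;e10,e11,e12;e20,e21,e22] : Matrix (Fin 3) (Fin 3) ℝ).map
        Complex.ofReal).det = 0) :
    μ^3 + ((-(e00+e11+e22) : ℝ) : ℂ)*μ^2
      + (((e00*e11 - e01*e10 + e00*e22 - e02*e20 + e11*e22 - e12*e21 : ℝ)) : ℂ) * μ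
      + ((-(e00*(e11*e22 - e12*e21) - e01*(e10*e22 - e12*e20)
          + e02*(e10*e21 - e11*e20)) : ℝ) : ℂ) = 0 := by
  rw [Matrix.det_fin_three] at h
  simp only [Matrix.sub_apply, Matrix.map_apply, Matrix.algebraMap_matrix_apply,
    Matrix.cons_val', Matrix.cons_val_zero, Matrix.cons_val_one, Matrix.head_cons,
    Matrix.empty_val', Matrix.cons_val_fin_one, Matrix.head_fin_const, Matrix.of_apply,
    Matrix.cons_val_two, Matrix.tail_cons, Fin.isValue] at h
  norm_num [Fin.ext_iff] at h
  push_cast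
  linear_combination h

set_option maxHeartbeats 1000000 in
private lemma coeffs_pos (K L M N p1 p2 q1 q2 : ℝ)
    (hK : 0 < K) (hL : 0 < L) (hM : 0 < M) (hN : 0 < N)
    (hp1 : 0 < p1) (hp1' : p1 < 1) (hp2 : 0 < p2) (hp2' : p2 < 1)
    (hq1 : q1 = 1 - p1) (hq2 : q2 = 1 - p2) :
    let e00 : ℝ := -(1/2); let e01 := (1/2)*(K - L); let e02 := -(1/2)*(M - N)
    let e10 := (q1 - q2)/2; let e11 := -(K + L) - (q1 + q2)/4; let e12 := (q1 + q2)/4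
    let e20 := (p2 - p1)/2; let e21 := (p1 + p2)/4; let e22 := -(M + N) - (p1 + p2)/4
    let A := -(e00+e11+e22)
    let B := e00*e11 - e01*e10 + e00*e22 - e02*e20 + e11*e22 - e12*e21
    let C := -(e00*(e11*e22 - e12*e21) - e01*(e10*e22 - e12*e20) + e02*(e10*e21 - e11*e20))
    0 < A ∧ 0 < C ∧ C < A*B := by
  subst hq1 hq2
  intro e00 e01 e02 e10 e11 e12 e20 e21 e22 A B C
  simp only [e00, e01, e02, e10, e11, e12, e20, e21, e22, A, B, C]
  have h12 : (0:ℝ) < 1 + p2 - p1 := by linarith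
  have h21 : (0:ℝ) < 1 + p1 - p2 := by linarith
  have hr1 : (0:ℝ) < 1 - p1 := by linarith
  have hr2 : (0:ℝ) < 1 - p2 := by linarith
  have hA : (0:ℝ) < -(-(1/2) + (-(K + L) - ((1-p1) + (1-p2))/4) + (-(M + N) - (p1 + p2)/4)) := by
    nlinarith
  refine ⟨by nlinarith, ?_, ?_⟩
  · nlinarith [mul_pos hN hr2, mul_pos hM hr1, mul_pos hL hp2, mul_pos hL hN,
      mul_pos (mul_pos hL hM) h12, mul_pos hK hp1, mul_pos (mul_pos hK hN) h21,
      mul_pos hK hM]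
  · have hB : (0:ℝ) < -(1/2:ℝ)*(-(K + L) - ((1-p1) + (1-p2))/4) - (1/2)*(K - L)*(((1-p1) - (1-p2))/2)
        + -(1/2:ℝ)*(-(M + N) - (p1 + p2)/4) - -(1/2)*(M - N)*((p2 - p1)/2)
        + (-(K + L) - ((1-p1) + (1-p2))/4)*(-(M + N) - (p1 + p2)/4)
        - ((1-p1) + (1-p2))/4*((p1 + p2)/4) := by
      nlinarith [mul_pos hN hr2, mul_pos hM hr1, mul_pos hL hp2, mul_pos hL hN,
        mul_pos hL hM, mul_pos hK hp1, mul_pos hK hN, mul_pos hK hM]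
    have hBC : -((-(1/2:ℝ))*((-(K + L) - ((1-p1) + (1-p2))/4)*(-(M + N) - (p1 + p2)/4)
          - ((1-p1) + (1-p2))/4*((p1 + p2)/4))
        - (1/2)*(K - L)*((((1-p1) - (1-p2))/2)*(-(M + N) - (p1 + p2)/4)
          - ((1-p1) + (1-p2))/4*((p2 - p1)/2))
        + (-(1/2))*(M - N)*((((1-p1) - (1-p2))/2)*((p1 + p2)/4)
          - (-(K + L) - ((1-p1) + (1-p2))/4)*((p2 - p1)/2)))
        < -(1/2:ℝ)*(-(K + L) - ((1-p1) + (1-p2))/4) - (1/2)*(K - L)*(((1-p1) - (1-p2))/2)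
        + -(1/2:ℝ)*(-(M + N) - (p1 + p2)/4) - -(1/2)*(M - N)*((p2 - p1)/2)
        + (-(K + L) - ((1-p1) + (1-p2))/4)*(-(M + N) - (p1 + p2)/4)
        - ((1-p1) + (1-p2))/4*((p1 + p2)/4) := by
      nlinarith [mul_pos hN hr2, mul_pos hM hr1, mul_pos hL hp2, mul_pos hL hN,
        mul_pos (mul_pos hL hM) h21, mul_pos hK hp1, mul_pos (mul_pos hK hN) h12,
        mul_pos hK hM, mul_pos hL hM, mul_pos hK hN]
    have hA1 : (1:ℝ) < -(-(1/2) + (-(K + L) - ((1-p1) + (1-p2))/4) + (-(M + N) - (p1 + p2)/4)) := by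
      nlinarith
    have := mul_lt_mul_of_pos_right hA1 hB
    nlinarith [this]

theorem stmt_13 (m1 m2 a N1a N1A N2a N2A : ℝ)
    (hm1 : 0 < m1) (hm2 : 0 < m2) (ha : 0 < a)
    (h1 : 0 < N1a) (h2 : 0 < N1A) (h3 : 0 < N2a) (h4 : 0 < N2A) :
    let p1 := N1A / (N1A + N1a); let q1 := N1a / (N1A + N1a)
    let p2 := N2A / (N2A + N2a); let q2 := N2a / (N2A + N2a)
    let JSL : Matrix (Fin 3) (Fin 3) ℝ :=
      !![-(1/2 : ℝ),
         (1/2) * (a * m2 * N2A / N1A - m1 * N1A / (a * N2A)),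
         -(1/2) * (a * m2 * N2a / N1a - m1 * N1a / (a * N2a));
         (q1 - q2) / 2,
         -(a * m2 * N2A / N1A + m1 * N1A / (a * N2A)) - (q1 + q2) / 4,
         (q1 + q2) / 4;
         (p2 - p1) / 2,
         (p1 + p2) / 4,
         -(a * m2 * N2a / N1a + m1 * N1a / (a * N2a)) - (p1 + p2) / 4]
    ∀ μ ∈ spectrum ℂ (JSL.map Complex.ofReal), μ.re < 0 := by
  intro p1 q1 p2 q2 JSL μ hμ
  have hdet := spectrum_det JSL μ hμ
  have hcubic := det_to_cubic _ _ _ _ _ _ _ _ _ μ hdet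
  have hd1 : (0:ℝ) < N1A + N1a := by linarith
  have hd2 : (0:ℝ) < N2A + N2a := by linarith
  have hq1 : q1 = 1 - p1 := by
    show N1a / (N1A + N1a) = 1 - N1A / (N1A + N1a)
    field_simp
    ring
  have hq2 : q2 = 1 - p2 := by
    show N2a / (N2A + N2a) = 1 - N2A / (N2A + N2a)
    field_simp
    ring
  have hp1 : 0 < p1 := div_pos h2 hd1
  have hp1' : p1 < 1 := (div_lt_one hd1).mpr (by linarith)
  have hp2 : 0 < p2 := div_pos h4 hd2
  have hp2' : p2 < 1 := (div_lt_one hd2).mpr (by linarith)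
  have hK : 0 < a * m2 * N2A / N1A := by positivity
  have hL : 0 < m1 * N1A / (a * N2A) := by positivity
  have hM : 0 < a * m2 * N2a / N1a := by positivity
  have hN : 0 < m1 * N1a / (a * N2a) := by positivity
  obtain ⟨hA, hC, hABC⟩ := coeffs_pos (a * m2 * N2A / N1A) (m1 * N1A / (a * N2A))
    (a * m2 * N2a / N1a) (m1 * N1a / (a * N2a)) p1 p2 q1 q2
    hK hL hM hN hp1 hp1' hp2 hp2' hq1 hq2
  exact cubic_re_neg _ _ _ hA hC hABC μ hcubic
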